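/- For every real x with 0 < x, the integral ∫₀ˣ (1 − cos(ξ)J₀(ξ))/ξ dξ equals −Σ_{n=1}^∞ ((1/4)_n (3/4)_n)/((1/2)_n (1/2)_n) · (−x²)^n / (2n·(n!)²). -/

import Mathlib

/-- Bessel function of the first kind of order 0, via its Taylor series. -/
noncomputable def besselJ0 (x : ℝ) : ℝ :=
  ∑' n : ℕ, (-1) ^ n * (x / 2) ^ (2 * n) / (Nat.factorial n : ℝ) ^ 2

/-- Pochhammer (rising factorial) symbol for real argument. -/
noncomputable def poch (a : ℝ) (n : ℕ) : ℝ := ∏ i ∈ Finset.range n, (a + i)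

open Polynomial Finset Nat MeasureTheory
open scoped ENNReal NNReal

section Aux

lemma coeff12 (j d : ℕ) : (((1:ℝ[X]) + 2*X) ^ j).coeff d = (j.choose d : ℝ) * 2^d := by
  have hC : (Polynomial.C (2:ℝ)) = 2 := map_ofNat _ 2
  have h : ((1:ℝ[X]) + 2*X) = Polynomial.C 2 * (X + Polynomial.C (1/2)) := by
    rw [mul_add, ← Polynomial.C_mul, hC]
    norm_num [add_comm]
  rw [h, mul_pow, ← Polynomial.C_pow, Polynomial.coeff_C_mul, Polynomial.coeff_X_add_C_pow]
  rcases le_or_gt d j with hd | hd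
  · have h2 : ((1:ℝ)/2)^(j-d) = 2^d / 2^j := by
      rw [div_pow, one_pow, pow_sub₀ (2:ℝ) two_ne_zero hd]
      field_simp
    rw [h2]
    have h3 : (2:ℝ)^j ≠ 0 := by positivity
    field_simp
  · simp [Nat.choose_eq_zero_of_lt hd]

lemma chch {n k : ℕ} (hk : k ≤ n) :
    ((2*n).choose (2*k) : ℝ) * ((2*n-2*k).choose (n-k))
      = ((2*n).choose (n+k)) * ((n+k).choose (2*k)) := by
  rw [Nat.cast_choose ℝ (by omega : 2*k ≤ 2*n),
      Nat.cast_choose ℝ (by omega : n-k ≤ 2*n-2*k),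
      Nat.cast_choose ℝ (by omega : n+k ≤ 2*n),
      Nat.cast_choose ℝ (by omega : 2*k ≤ n+k),
      show 2*n-2*k-(n-k) = n-k by omega, show 2*n-(n+k) = n-k by omega,
      show n+k-2*k = n-k by omega]
  have f1 : ((2*k)! : ℝ) ≠ 0 := Nat.cast_ne_zero.mpr (Nat.factorial_ne_zero _)
  have f2 : ((2*n-2*k)! : ℝ) ≠ 0 := Nat.cast_ne_zero.mpr (Nat.factorial_ne_zero _)
  have f3 : ((n-k)! : ℝ) ≠ 0 := Nat.cast_ne_zero.mpr (Nat.factorial_ne_zero _)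
  have f4 : ((n+k)! : ℝ) ≠ 0 := Nat.cast_ne_zero.mpr (Nat.factorial_ne_zero _)
  field_simp

lemma keysum (n : ℕ) :
    ∑ k ∈ Finset.range (n+1), (4:ℝ)^k * ((2*n).choose (2*k)) * ((2*n-2*k).choose (n-k))
      = ((4*n).choose (2*n) : ℝ) := by
  have h1 : (((1:ℝ[X]) + X) ^ (4*n)).coeff (2*n) = ((4*n).choose (2*n) : ℝ) :=
    Polynomial.coeff_one_add_X_pow ℝ (4*n) (2*n)
  have h2 : ((1:ℝ[X]) + X) ^ (4*n) = ((1 + 2*X) + X^2) ^ (2*n) := by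
    rw [show 4*n = 2*(2*n) by ring, pow_mul]
    congr 1
    ring
  rw [h2, add_pow] at h1
  have hterm : ∀ j ∈ Finset.range (2*n+1),
      (((1:ℝ[X]) + 2*X) ^ j * (X^2) ^ (2*n - j) * ((2*n).choose j : ℝ[X])).coeff (2*n)
      = (if 2*(2*n-j) ≤ 2*n then (j.choose (2*n - 2*(2*n-j)) : ℝ) * 2^(2*n - 2*(2*n-j)) else 0)
          * ((2*n).choose j : ℝ) := by
    intro j _
    rw [← pow_mul, ← Polynomial.C_eq_natCast, Polynomial.coeff_mul_C,
        Polynomial.coeff_mul_X_pow']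
    split_ifs with h
    · rw [coeff12]
    · simp
  have hz : ∀ j ∈ Finset.range n,
      (if 2*(2*n-j) ≤ 2*n then ((j.choose (2*n - 2*(2*n-j))) : ℝ) * 2^(2*n - 2*(2*n-j)) else 0)
        * ((2*n).choose j : ℝ) = 0 := by
    intro j hj
    rw [Finset.mem_range] at hj
    rw [if_neg (by omega)]
    ring
  rw [Polynomial.finset_sum_coeff, Finset.sum_congr rfl hterm,
      show 2*n+1 = n + (n+1) by ring, Finset.sum_range_add,
      Finset.sum_congr rfl hz, Finset.sum_const_zero, zero_add] at h1
  rw [← h1]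
  apply Finset.sum_congr rfl
  intro k hk
  rw [Finset.mem_range] at hk
  rw [if_pos (by omega), show 2*n - 2*(2*n-(n+k)) = 2*k by omega,
      mul_assoc, chch (by omega : k ≤ n), show (2:ℝ)^(2*k) = 4^k by rw [pow_mul]; norm_num]
  ring

/-- The coefficient `((1/4)_m (3/4)_m)/((1/2)_m)^2` in closed factorial form. -/
noncomputable def cc (m : ℕ) : ℝ := ((4*m)! : ℝ) * ((m ! : ℝ))^2 / (4^m * ((2*m)! : ℝ)^3)

lemma chfact {m k : ℕ} (hk : k ≤ m) :
    ((2*m).choose (2*k) : ℝ) * ((2*m-2*k).choose (m-k))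
      = ((2*m)! : ℝ) / (((2*k)! : ℝ) * (((m-k)! : ℝ))^2) := by
  rw [Nat.cast_choose ℝ (by omega : 2*k ≤ 2*m),
      Nat.cast_choose ℝ (by omega : m-k ≤ 2*m-2*k),
      show 2*m-2*k-(m-k) = m-k by omega]
  have f1 : ((2*k)! : ℝ) ≠ 0 := Nat.cast_ne_zero.mpr (Nat.factorial_ne_zero _)
  have f2 : ((2*m-2*k)! : ℝ) ≠ 0 := Nat.cast_ne_zero.mpr (Nat.factorial_ne_zero _)
  have f3 : ((m-k)! : ℝ) ≠ 0 := Nat.cast_ne_zero.mpr (Nat.factorial_ne_zero _)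
  field_simp

lemma keyR (m : ℕ) :
    ∑ k ∈ Finset.range (m+1), (1:ℝ)/(((2*k)! : ℝ) * 4^(m-k) * (((m-k)! : ℝ))^2)
      = cc m / ((m ! : ℝ))^2 := by
  have h : ∀ k ∈ Finset.range (m+1), (1:ℝ)/(((2*k)!:ℝ) * 4^(m-k) * (((m-k)!:ℝ))^2)
      = ((4:ℝ)^k * ((2*m).choose (2*k)) * ((2*m-2*k).choose (m-k))) / (4^m * ((2*m)!:ℝ)) := by
    intro k hk
    rw [Finset.mem_range] at hk
    rw [show (4:ℝ)^k * (((2*m).choose (2*k) : ℝ)) * (((2*m-2*k).choose (m-k) : ℝ))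
          = 4^k * ((((2*m).choose (2*k) : ℝ)) * (((2*m-2*k).choose (m-k) : ℝ))) from by ring,
        chfact (by omega : k ≤ m)]
    have h4 : (4:ℝ)^m = 4^k * 4^(m-k) := by rw [← pow_add]; congr 1; omega
    have f1 : ((2*k)! : ℝ) ≠ 0 := Nat.cast_ne_zero.mpr (Nat.factorial_ne_zero _)
    have f2 : ((2*m)! : ℝ) ≠ 0 := Nat.cast_ne_zero.mpr (Nat.factorial_ne_zero _)
    have f3 : ((m-k)! : ℝ) ≠ 0 := Nat.cast_ne_zero.mpr (Nat.factorial_ne_zero _)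
    have f4 : (4:ℝ)^(m-k) ≠ 0 := by positivity
    have f5 : (4:ℝ)^k ≠ 0 := by positivity
    rw [h4]
    field_simp
  rw [Finset.sum_congr rfl h, ← Finset.sum_div, keysum,
      Nat.cast_choose ℝ (by omega : 2*m ≤ 4*m), show 4*m - 2*m = 2*m by omega]
  unfold cc
  have f1 : ((2*m)! : ℝ) ≠ 0 := Nat.cast_ne_zero.mpr (Nat.factorial_ne_zero _)
  have f2 : ((m)! : ℝ) ≠ 0 := Nat.cast_ne_zero.mpr (Nat.factorial_ne_zero _)
  have f4 : (4:ℝ)^m ≠ 0 := by positivity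
  field_simp

lemma cc_nonneg (m : ℕ) : 0 ≤ cc m := by unfold cc; positivity

lemma cc_le (m : ℕ) : cc m / ((m ! : ℝ))^2 ≤ 2^m / (m ! : ℝ) := by
  rw [← keyR]
  have h2 : ∑ k ∈ Finset.range (m+1), (1:ℝ)/((k ! : ℝ) * ((m-k)! : ℝ)) = 2^m / (m ! : ℝ) := by
    have hc : ∀ k ∈ Finset.range (m+1), (1:ℝ)/((k ! : ℝ) * ((m-k)! : ℝ))
        = (m.choose k : ℝ) / (m ! : ℝ) := by
      intro k hk
      rw [Finset.mem_range] at hk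
      rw [Nat.cast_choose ℝ (by omega : k ≤ m)]
      have f1 : ((k)! : ℝ) ≠ 0 := Nat.cast_ne_zero.mpr (Nat.factorial_ne_zero _)
      have f2 : ((m-k)! : ℝ) ≠ 0 := Nat.cast_ne_zero.mpr (Nat.factorial_ne_zero _)
      have f3 : ((m)! : ℝ) ≠ 0 := Nat.cast_ne_zero.mpr (Nat.factorial_ne_zero _)
      field_simp
    rw [Finset.sum_congr rfl hc, ← Finset.sum_div]
    norm_cast
    rw [Nat.sum_range_choose]
  rw [← h2]
  apply Finset.sum_le_sum
  intro k hk
  rw [Finset.mem_range] at hk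
  apply one_div_le_one_div_of_le
  · positivity
  · have a1 : ((k)! : ℝ) ≤ ((2*k)! : ℝ) := by
      exact_mod_cast Nat.factorial_le (by omega)
    have a2 : (1:ℝ) ≤ ((m-k)! : ℝ) := by
      exact_mod_cast Nat.one_le_iff_ne_zero.mpr (Nat.factorial_ne_zero _)
    have a3 : (1:ℝ) ≤ (4:ℝ)^(m-k) := one_le_pow₀ (by norm_num)
    have a4 : (0:ℝ) < ((m-k)! : ℝ) := by positivity
    have a5 : (0:ℝ) ≤ ((k)! : ℝ) := by positivity
    have b2 : ((m-k)! : ℝ) ≤ (((m-k)! : ℝ))^2 := by nlinarith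
    calc ((k)! : ℝ) * ((m-k)! : ℝ) ≤ ((2*k)! : ℝ) * (((m-k)! : ℝ))^2 :=
          mul_le_mul a1 b2 (by positivity) (by positivity)
      _ = (((2*k)! : ℝ) * (((m-k)! : ℝ))^2) * 1 := by ring
      _ ≤ (((2*k)! : ℝ) * (((m-k)! : ℝ))^2) * 4^(m-k) :=
          mul_le_mul_of_nonneg_left a3 (by positivity)
      _ = ((2*k)! : ℝ) * 4^(m-k) * (((m-k)! : ℝ))^2 := by ring

lemma summable_v (t : ℝ) :
    Summable (fun m : ℕ => cc m * (-1)^m * t^(2*m) / ((m ! : ℝ))^2) := by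
  have hb : ∀ m : ℕ, ‖cc m * (-1)^m * t^(2*m) / ((m ! : ℝ))^2‖ ≤ (2*t^2)^m / (m ! : ℝ) := by
    intro m
    have e1 : |t ^ (2*m)| = (t^2)^m := by rw [pow_mul, abs_pow, abs_sq]
    rw [Real.norm_eq_abs, abs_div, abs_mul, abs_mul, abs_pow, abs_neg, abs_one, one_pow,
        mul_one, abs_of_nonneg (cc_nonneg m), e1, abs_pow, Nat.abs_cast, mul_pow]
    have h3 := mul_le_mul_of_nonneg_right (cc_le m) (pow_nonneg (sq_nonneg t) m)
    calc cc m * (t^2)^m / ((m ! : ℝ))^2 = (cc m / ((m ! : ℝ))^2) * (t^2)^m := by ring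
      _ ≤ (2^m / (m ! : ℝ)) * (t^2)^m := h3
      _ = 2^m * (t^2)^m / (m ! : ℝ) := by ring
  exact Summable.of_norm (Summable.of_nonneg_of_le (fun m => norm_nonneg _) hb
    (Real.summable_pow_div_factorial (2*t^2)))

lemma summable_cos_norm (t : ℝ) :
    Summable (fun i : ℕ => ‖(-1:ℝ)^i * t^(2*i) / ((2*i)! : ℝ)‖) := by
  apply Summable.of_nonneg_of_le (fun i => norm_nonneg _) _
    (Real.summable_pow_div_factorial (t^2))
  intro i
  simp only [Real.norm_eq_abs, abs_div, abs_mul, abs_pow, abs_neg, abs_one, one_pow, one_mul,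
      Nat.abs_cast, pow_mul, abs_sq, sq_abs]
  gcongr
  omega

lemma summable_J0_norm (t : ℝ) :
    Summable (fun j : ℕ => ‖(-1:ℝ)^j * (t/2)^(2*j) / ((j ! : ℝ))^2‖) := by
  apply Summable.of_nonneg_of_le (fun j => norm_nonneg _) _
    (Real.summable_pow_div_factorial ((t/2)^2))
  intro j
  simp only [Real.norm_eq_abs, abs_div, abs_mul, abs_pow, abs_neg, abs_one, one_pow, one_mul,
      Nat.abs_cast, pow_mul, abs_sq, sq_abs]
  have h1 : (1:ℝ) ≤ (j ! : ℝ) := by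
    exact_mod_cast Nat.one_le_iff_ne_zero.mpr (Nat.factorial_ne_zero _)
  have e : (|t|/|2|)^2 = (t/2)^2 := by
    rw [div_pow, div_pow, sq_abs, sq_abs]
  rw [e]
  apply div_le_div_of_nonneg_left (by positivity) (by positivity)
  nlinarith

lemma prodid (t : ℝ) :
    Real.cos t * besselJ0 t = ∑' m, cc m * (-1)^m * t^(2*m) / ((m ! : ℝ))^2 := by
  rw [Real.cos_eq_tsum]
  simp only [besselJ0]
  rw [tsum_mul_tsum_eq_tsum_sum_range_of_summable_norm (summable_cos_norm t)
      (summable_J0_norm t)]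
  apply tsum_congr
  intro m
  have hterm : ∀ k ∈ Finset.range (m+1),
      ((-1:ℝ)^k * t^(2*k) / ((2*k)! : ℝ)) * ((-1:ℝ)^(m-k) * (t/2)^(2*(m-k)) / (((m-k)! : ℝ))^2)
      = ((-1:ℝ)^m * t^(2*m)) * ((1:ℝ)/(((2*k)! : ℝ) * 4^(m-k) * (((m-k)! : ℝ))^2)) := by
    intro k hk
    rw [Finset.mem_range] at hk
    have e1 : (-1:ℝ)^k * (-1:ℝ)^(m-k) = (-1)^m := by rw [← pow_add]; congr 1; omega
    have e2 : t^(2*k) * t^(2*(m-k)) = t^(2*m) := by rw [← pow_add]; congr 1; omega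
    rw [div_pow, show (2:ℝ)^(2*(m-k)) = 4^(m-k) from by rw [pow_mul]; norm_num]
    rw [show ((-1:ℝ)^k * t^(2*k) / ((2*k)! : ℝ))
          * ((-1:ℝ)^(m-k) * (t^(2*(m-k))/4^(m-k)) / (((m-k)! : ℝ))^2)
        = ((-1:ℝ)^k * (-1:ℝ)^(m-k)) * (t^(2*k) * t^(2*(m-k)))
          * ((1:ℝ)/(((2*k)! : ℝ) * 4^(m-k) * (((m-k)! : ℝ))^2)) from by ring, e1, e2]
  rw [Finset.sum_congr rfl hterm, ← Finset.mul_sum, keyR]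
  ring

lemma poch_succ (a : ℝ) (n : ℕ) : poch a (n+1) = poch a n * (a + n) := by
  unfold poch; rw [Finset.prod_range_succ]

lemma poch_half (m : ℕ) : poch (1/2) m = ((2*m)! : ℝ) / (4^m * (m ! : ℝ)) := by
  induction m with
  | zero => simp [poch]
  | succ m ih =>
    rw [poch_succ, ih]
    have h2 : ((2*(m+1))! : ℝ) = (2*m+2) * ((2*m+1) * ((2*m)! : ℝ)) := by
      rw [show 2*(m+1) = (2*m+1)+1 by ring, Nat.factorial_succ, Nat.factorial_succ]
      push_cast; ring
    rw [h2, Nat.factorial_succ]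
    have f1 : ((m)! : ℝ) ≠ 0 := Nat.cast_ne_zero.mpr (Nat.factorial_ne_zero _)
    have f2 : (4:ℝ)^m ≠ 0 := by positivity
    field_simp
    push_cast; ring

lemma poch_quarters (m : ℕ) :
    poch (1/4) m * poch (3/4) m = ((4*m)! : ℝ) / (4^(3*m) * ((2*m)! : ℝ)) := by
  induction m with
  | zero => simp [poch]
  | succ m ih =>
    rw [poch_succ, poch_succ,
        show poch (1/4) m * (1/4 + m) * (poch (3/4) m * (3/4 + m))
          = poch (1/4) m * poch (3/4) m * ((1/4 + m) * (3/4 + m)) from by ring, ih]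
    have h4 : ((4*(m+1))! : ℝ) = (4*m+4) * ((4*m+3) * ((4*m+2) * ((4*m+1) * ((4*m)! : ℝ)))) := by
      rw [show 4*(m+1) = (4*m+3)+1 by ring, Nat.factorial_succ,
          show 4*m+3 = (4*m+2)+1 by ring, Nat.factorial_succ,
          show 4*m+2 = (4*m+1)+1 by ring, Nat.factorial_succ, Nat.factorial_succ]
      push_cast; ring
    have h2 : ((2*(m+1))! : ℝ) = (2*m+2) * ((2*m+1) * ((2*m)! : ℝ)) := by
      rw [show 2*(m+1) = (2*m+1)+1 by ring, Nat.factorial_succ, Nat.factorial_succ]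
      push_cast; ring
    have h3 : (4:ℝ)^(3*(m+1)) = 4^(3*m) * 64 := by
      rw [show 3*(m+1) = 3*m + 3 by ring, pow_add]; norm_num
    rw [h4, h2, h3]
    have f1 : ((2*m)! : ℝ) ≠ 0 := Nat.cast_ne_zero.mpr (Nat.factorial_ne_zero _)
    have f2 : (4:ℝ)^(3*m) ≠ 0 := by positivity
    field_simp
    ring

lemma pochratio (m : ℕ) :
    poch (1/4) m * poch (3/4) m / (poch (1/2) m * poch (1/2) m) = cc m := by
  rw [poch_quarters, poch_half]
  unfold cc
  have f1 : ((2*m)! : ℝ) ≠ 0 := Nat.cast_ne_zero.mpr (Nat.factorial_ne_zero _)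
  have f2 : ((m)! : ℝ) ≠ 0 := Nat.cast_ne_zero.mpr (Nat.factorial_ne_zero _)
  have f3 : (4:ℝ)^m ≠ 0 := by positivity
  have h3 : (4:ℝ)^(3*m) = 4^m * 4^m * 4^m := by
    rw [show 3*m = m + m + m by ring, pow_add, pow_add]
  rw [h3]
  field_simp

/-- The term functions of the integrand's series expansion. -/
noncomputable def gfun (n : ℕ) (t : ℝ) : ℝ :=
  -(cc (n+1) * (-1)^(n+1) * t^(2*n+1) / (((n+1)! : ℝ))^2)

lemma stepA {t : ℝ} (ht0 : 0 < t) :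
    (1 - Real.cos t * besselJ0 t) / t = ∑' n, gfun n t := by
  have hs : Summable (fun m : ℕ => cc m * (-1)^m * t^(2*m) / ((m ! : ℝ))^2) := summable_v t
  have hs' : Summable (fun n : ℕ => cc (n+1) * (-1)^(n+1) * t^(2*(n+1)) / (((n+1)! : ℝ))^2) :=
    (summable_nat_add_iff (f := fun m : ℕ => cc m * (-1)^m * t^(2*m) / ((m ! : ℝ))^2) 1).mpr hs
  have h0 : cc 0 * (-1)^0 * t^(2*0) / ((0! : ℝ))^2 = 1 := by
    norm_num [cc]
  rw [prodid t, Summable.tsum_eq_zero_add hs, h0]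
  rw [show ∀ S : ℝ, 1 - (1 + S) = -S from fun S => by ring]
  rw [neg_div, ← tsum_div_const, ← tsum_neg]
  apply tsum_congr
  intro n
  unfold gfun
  have e2 : t^(2*(n+1)) = t^(2*n+1) * t := by ring
  rw [e2]
  field_simp

lemma gfun_cont (n : ℕ) : Continuous (gfun n) := by
  unfold gfun
  fun_prop

end Aux

theorem CJin_series (x : ℝ) (hx : 0 < x) :
    ∫ ξ in (0:ℝ)..x, (1 - Real.cos ξ * besselJ0 ξ) / ξ =
      -∑' n : ℕ, (poch (1/4) (n+1) * poch (3/4) (n+1)) / (poch (1/2) (n+1) * poch (1/2) (n+1))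
        * (-(x ^ 2)) ^ (n+1) / (2 * ((n : ℝ) + 1) * (Nat.factorial (n+1) : ℝ) ^ 2) := by
  classical
  have hle : (0:ℝ) ≤ x := hx.le
  have hEq : Set.EqOn (fun ξ : ℝ => (1 - Real.cos ξ * besselJ0 ξ) / ξ)
      (fun t : ℝ => ∑' n, gfun n t) (Set.Ioc 0 x) := fun t ht => stepA ht.1
  rw [intervalIntegral.integral_of_le hle,
      MeasureTheory.setIntegral_congr_fun measurableSet_Ioc hEq]
  have hmeas : ∀ n : ℕ, AEStronglyMeasurable (gfun n) (volume.restrict (Set.Ioc 0 x)) :=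
    fun n => (gfun_cont n).aestronglyMeasurable
  set u : ℕ → ℝ := fun n => cc (n+1) * x^(2*n+1) / (((n+1)! : ℝ))^2 with hu
  have hunonneg : ∀ n, 0 ≤ u n := by
    intro n
    simp only [hu]
    have := cc_nonneg (n+1)
    positivity
  have husum : Summable (fun n => u n * x) := by
    have h1 : Summable (fun m : ℕ => |cc m * (-1)^m * x^(2*m) / ((m ! : ℝ))^2|) :=
      (summable_v x).abs
    have h2 : Summable (fun n : ℕ => |cc (n+1) * (-1)^(n+1) * x^(2*(n+1)) / (((n+1)! : ℝ))^2|) :=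
      (summable_nat_add_iff (f := fun m : ℕ => |cc m * (-1)^m * x^(2*m) / ((m ! : ℝ))^2|) 1).mpr h1
    apply h2.congr
    intro n
    simp only [hu, abs_div, abs_mul, abs_pow, abs_neg, abs_one, one_pow, mul_one,
        Nat.abs_cast, abs_of_nonneg (cc_nonneg (n+1)), abs_of_nonneg hle]
    rw [show 2*(n+1) = (2*n+1)+1 by ring, pow_succ]
    ring
  have hbound : ∀ n : ℕ, ∀ t ∈ Set.Ioc (0:ℝ) x, ‖gfun n t‖ ≤ u n := by
    intro n t ht
    unfold gfun
    simp only [hu]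
    rw [norm_neg, Real.norm_eq_abs]
    simp only [abs_div, abs_mul, abs_pow, abs_neg, abs_one, one_pow, mul_one,
        Nat.abs_cast, abs_of_nonneg (cc_nonneg (n+1))]
    gcongr
    · exact cc_nonneg (n+1)
    · rw [abs_of_pos ht.1]; exact ht.2
  have hfin : ∑' n, ∫⁻ t in Set.Ioc (0:ℝ) x, ‖gfun n t‖₊ ∂volume ≠ ⊤ := by
    have hstep : ∀ n : ℕ, ∫⁻ t in Set.Ioc (0:ℝ) x, ‖gfun n t‖₊ ∂volume
        ≤ ENNReal.ofReal (u n * x) := by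
      intro n
      have hb : ∀ᵐ t ∂(volume.restrict (Set.Ioc (0:ℝ) x)),
          (‖gfun n t‖₊ : ℝ≥0∞) ≤ ENNReal.ofReal (u n) := by
        filter_upwards [ae_restrict_mem measurableSet_Ioc] with t ht
        rw [← enorm_eq_nnnorm, ← ofReal_norm]
        exact ENNReal.ofReal_le_ofReal (hbound n t ht)
      calc ∫⁻ t in Set.Ioc (0:ℝ) x, ‖gfun n t‖₊ ∂volume
          ≤ ∫⁻ _ in Set.Ioc (0:ℝ) x, ENNReal.ofReal (u n) ∂volume := lintegral_mono_ae hb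
        _ = ENNReal.ofReal (u n) * volume (Set.Ioc (0:ℝ) x) := setLIntegral_const _ _
        _ = ENNReal.ofReal (u n) * ENNReal.ofReal x := by rw [Real.volume_Ioc, sub_zero]
        _ = ENNReal.ofReal (u n * x) := (ENNReal.ofReal_mul (hunonneg n)).symm
    have h2 : ∑' n, ∫⁻ t in Set.Ioc (0:ℝ) x, ‖gfun n t‖₊ ∂volume
        ≤ ∑' n, ENNReal.ofReal (u n * x) := ENNReal.tsum_le_tsum hstep
    have h3 : (∑' n, ENNReal.ofReal (u n * x)) = ENNReal.ofReal (∑' n, u n * x) :=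
      (ENNReal.ofReal_tsum_of_nonneg (fun n => mul_nonneg (hunonneg n) hle) husum).symm
    rw [h3] at h2
    exact ne_top_of_le_ne_top ENNReal.ofReal_ne_top h2
  rw [MeasureTheory.integral_tsum hmeas hfin, ← tsum_neg]
  apply tsum_congr
  intro n
  have hgK : gfun n = fun t : ℝ => (-(cc (n+1) * (-1)^(n+1) / (((n+1)! : ℝ))^2)) * t^(2*n+1) := by
    funext t
    unfold gfun
    ring
  rw [← intervalIntegral.integral_of_le hle, hgK,
      intervalIntegral.integral_const_mul, integral_pow, pochratio (n+1),
      show (-(x^2))^(n+1) = (-1)^(n+1) * x^(2*(n+1)) from by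
        rw [neg_pow, ← pow_mul]]
  have f1 : (((n+1)! : ℝ)) ≠ 0 := Nat.cast_ne_zero.mpr (Nat.factorial_ne_zero _)
  have f2 : ((n:ℝ) + 1) ≠ 0 := by positivity
  rw [zero_pow (by omega : 2*n+1+1 ≠ 0)]
  push_cast
  field_simp
  ring
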